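/- Let a ∈ ℝ, V : [a,∞) → ℝ continuous with V(x) ≥ E for all x ≥ a, where E ∈ ℝ. Let ψ : [a,∞) → ℝ be twice continuously differentiable, square-integrable on [a,∞), and satisfy −ψ''(x) + V(x)ψ(x) = Eψ(x) for all x ≥ a. Then ψ' is square-integrable on [a,∞) and the function x ↦ (V(x) − E)^{1/2}·ψ(x) is square-integrable on [a,∞); in fact ∫_a^∞ ( (ψ'(x))² + (V(x)−E)·ψ(x)² ) dx < ∞. -/

import Mathlib

open MeasureTheory Set

/-- Half-line case of Proposition 2.2: any `L²` solution of `−ψ'' + Vψ = Eψ` on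
`[a,∞)` with `V ≥ E` automatically has finite energy: `ψ' ∈ L²`,
`(V−E)^{1/2}ψ ∈ L²`, and `∫_a^∞ ((ψ')² + (V−E)ψ²) < ∞`. -/
theorem eigensolution_finite_energy (a : ℝ) (V : ℝ → ℝ)
    (hV : ContinuousOn V (Set.Ici a)) (E : ℝ) (hVE : ∀ x ≥ a, E ≤ V x)
    (ψ : ℝ → ℝ) (hψC2 : ContDiffOn ℝ 2 ψ (Set.Ici a))
    (hψL2 : IntegrableOn (fun x => (ψ x) ^ 2) (Set.Ici a))
    (heq : ∀ x ≥ a, -(deriv (deriv ψ) x) + V x * ψ x = E * ψ x) :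
    IntegrableOn (fun x => (deriv ψ x) ^ 2) (Set.Ici a) ∧
    IntegrableOn (fun x => (Real.sqrt (V x - E) * ψ x) ^ 2) (Set.Ici a) ∧
    IntegrableOn (fun x => (deriv ψ x) ^ 2 + (V x - E) * (ψ x) ^ 2) (Set.Ici a) := by
  have hopen : IsOpen (Ioi a) := isOpen_Ioi
  have hψC2' : ContDiffOn ℝ 2 ψ (Ioi a) := hψC2.mono Ioi_subset_Ici_self
  have hg1 : ContDiffOn ℝ 1 (deriv ψ) (Ioi a) :=
    hψC2'.deriv_of_isOpen hopen (by norm_num)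
  have hψd : ∀ x ∈ Ioi a, HasDerivAt ψ (deriv ψ x) x := fun x hx =>
    ((hψC2'.differentiableOn (by norm_num)).differentiableAt
      (hopen.mem_nhds hx)).hasDerivAt
  have hgd : ∀ x ∈ Ioi a, HasDerivAt (deriv ψ) (deriv (deriv ψ) x) x := fun x hx =>
    ((hg1.differentiableOn (by norm_num)).differentiableAt
      (hopen.mem_nhds hx)).hasDerivAt
  have hdd : ∀ x ∈ Ioi a, deriv (deriv ψ) x = (V x - E) * ψ x := by
    intro x hx
    have := heq x (le_of_lt hx)
    ring_nf
    ring_nf at this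
    linarith
  set φ : ℝ → ℝ := fun x => (deriv ψ x) ^ 2 + (V x - E) * (ψ x) ^ 2 with hφdef
  set F : ℝ → ℝ := fun x => ψ x * deriv ψ x with hFdef
  have hF : ∀ x ∈ Ioi a, HasDerivAt F (φ x) x := by
    intro x hx
    have h := (hψd x hx).mul (hgd x hx)
    rw [hdd x hx] at h
    convert h using 1
    · rfl
    · rfl
    · rfl
    simp only [hφdef]
    ring
  have hφ0 : ∀ x ∈ Ici a, 0 ≤ φ x := by
    intro x hx
    have := hVE x hx
    have h1 : 0 ≤ (V x - E) * (ψ x) ^ 2 := mul_nonneg (by linarith) (sq_nonneg _)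
    have h2 : 0 ≤ (deriv ψ x) ^ 2 := sq_nonneg _
    simp only [hφdef]; linarith
  have hψcont : ContinuousOn ψ (Ioi a) := hψC2'.continuousOn
  have hgcont : ContinuousOn (deriv ψ) (Ioi a) := hg1.continuousOn
  have hFcont : ContinuousOn F (Ioi a) := hψcont.mul hgcont
  have hφcont : ContinuousOn φ (Ioi a) := by
    apply ContinuousOn.add (hgcont.pow 2)
    exact (((hV.mono Ioi_subset_Ici_self).sub continuousOn_const).mul
      (hψcont.pow 2))
  -- F ≤ 0 on Ioi a
  have hFle : ∀ x ∈ Ioi a, F x ≤ 0 := by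
    by_contra hcon
    push_neg at hcon
    obtain ⟨x₀, hx₀, hc⟩ := hcon
    obtain ⟨c, hcdef⟩ : ∃ c, F x₀ = c := ⟨F x₀, rfl⟩
    rw [hcdef] at hc
    have hsub : Ici x₀ ⊆ Ioi a := fun y hy => mem_Ioi.2 (lt_of_lt_of_le hx₀ hy)
    have hintsub : Ioi x₀ ⊆ Ioi a := fun y hy => mem_Ioi.2 (lt_trans hx₀ hy)
    have hmono : MonotoneOn F (Ici x₀) := by
      apply monotoneOn_of_deriv_nonneg (convex_Ici x₀) (hFcont.mono hsub)
      · rw [interior_Ici]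
        exact fun y hy => ((hF y (hintsub hy)).differentiableAt).differentiableWithinAt
      · rw [interior_Ici]
        intro y hy
        rw [(hF y (hintsub hy)).deriv]
        exact hφ0 y (mem_Ici.2 (le_of_lt (hintsub hy)))
    have hGmono : MonotoneOn (fun x => ψ x ^ 2 - 2 * c * x) (Ici x₀) := by
      apply monotoneOn_of_deriv_nonneg (convex_Ici x₀)
      · exact ((hψcont.mono hsub).pow 2).sub (continuousOn_const.mul continuousOn_id)
      · rw [interior_Ici]
        intro y hy
        have h1 : HasDerivAt (fun x => ψ x ^ 2 - 2 * c * x) (2 * F y - 2 * c) y := by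
          have := ((hψd y (hintsub hy)).pow 2).sub
            ((hasDerivAt_id y).const_mul (2 * c))
          convert this using 1
          · rfl
          · rfl
          · rfl
          simp [hFdef]; ring
        exact h1.differentiableAt.differentiableWithinAt
      · rw [interior_Ici]
        intro y hy
        have h1 : HasDerivAt (fun x => ψ x ^ 2 - 2 * c * x) (2 * F y - 2 * c) y := by
          have := ((hψd y (hintsub hy)).pow 2).sub
            ((hasDerivAt_id y).const_mul (2 * c))
          convert this using 1
          · rfl
          · rfl
          · rfl
          simp [hFdef]; ring
        rw [h1.deriv]
        have := hmono (self_mem_Ici) (mem_Ici.2 (le_of_lt hy)) (le_of_lt hy)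
        rw [hcdef] at this
        linarith
    -- growth
    obtain ⟨t, htdef⟩ : ∃ t, t = x₀ + 1 / (2 * c) := ⟨_, rfl⟩
    have ht : x₀ ≤ t := by
      have : 0 < 1 / (2 * c) := by positivity
      linarith
    have hgrow : ∀ x ∈ Ici t, 1 ≤ ψ x ^ 2 := by
      intro x hx
      have hx' : x₀ ≤ x := le_trans ht hx
      have hG := hGmono self_mem_Ici hx' hx'
      dsimp only at hG
      have h2 : 2 * c * (x - x₀) ≥ 1 := by
        have hxt : t ≤ x := hx
        have : 1 / (2 * c) ≤ x - x₀ := by simp only [htdef] at hxt; linarith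
        calc (1:ℝ) = 2 * c * (1 / (2 * c)) := by field_simp
        _ ≤ 2 * c * (x - x₀) := by
            apply mul_le_mul_of_nonneg_left this (by positivity)
      nlinarith [sq_nonneg (ψ x₀), hG]
    have hta : a ≤ t := le_trans (le_of_lt hx₀) ht
    have hint : IntegrableOn (fun x => (ψ x) ^ 2) (Ici t) :=
      hψL2.mono_set (Ici_subset_Ici.2 hta)
    have h1int : IntegrableOn (fun _ : ℝ => (1:ℝ)) (Ici t) := by
      apply Integrable.mono' hint
      · exact aestronglyMeasurable_const
      · filter_upwards [ae_restrict_mem measurableSet_Ici] with x hx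
        simpa using hgrow x hx
    rw [integrableOn_const_iff] at h1int
    rcases h1int with h | h
    · norm_num at h
    · rw [Real.volume_Ici] at h
      exact (lt_irrefl _ h).elim
  -- integrability of φ near a
  set c₀ := a + 1 with hc₀def
  have hac₀ : a < c₀ := by simp [hc₀def]
  have hnear : IntegrableOn φ (Ioc a c₀) := by
    set φ' : ℝ → ℝ := fun x => (derivWithin ψ (Ici a) x) ^ 2 + (V x - E) * (ψ x) ^ 2
    have hdW : ContinuousOn (derivWithin ψ (Ici a)) (Ici a) := by
      have := hψC2.continuousOn_derivWithin (uniqueDiffOn_Ici a) (by norm_num)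
      exact this
    have hφ'cont : ContinuousOn φ' (Icc a c₀) := by
      apply ContinuousOn.add
      · exact ((hdW.mono Icc_subset_Ici_self).pow 2)
      · exact ((hV.mono Icc_subset_Ici_self).sub continuousOn_const).mul
          ((hψC2.continuousOn.mono Icc_subset_Ici_self).pow 2)
    have hφ'int : IntegrableOn φ' (Icc a c₀) := hφ'cont.integrableOn_Icc
    have : IntegrableOn φ' (Ioc a c₀) := hφ'int.mono_set Ioc_subset_Icc_self
    apply this.congr_fun _ measurableSet_Ioc
    intro x hx
    have : derivWithin ψ (Ici a) x = deriv ψ x :=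
      derivWithin_of_mem_nhds (Ici_mem_nhds hx.1)
    simp only [φ', hφdef, this]
  -- tail integrability
  have htail : IntegrableOn φ (Ioi c₀) := by
    apply integrableOn_Ioi_of_intervalIntegral_norm_bounded (-F c₀) c₀
      (b := fun i : ℝ => i) (l := Filter.atTop) ?_ Filter.tendsto_id
    · filter_upwards [Filter.eventually_ge_atTop c₀] with i hi
      have hftc : ∫ x in c₀..i, φ x = F i - F c₀ := by
        apply intervalIntegral.integral_eq_sub_of_hasDerivAt
        · intro x hx
          rw [uIcc_of_le hi] at hx
          exact hF x (lt_of_lt_of_le hac₀ hx.1)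
        · apply ContinuousOn.intervalIntegrable
          rw [uIcc_of_le hi]
          exact hφcont.mono (fun y hy => lt_of_lt_of_le hac₀ hy.1)
      have hnorm : ∀ x ∈ Ioc c₀ i, ‖φ x‖ = φ x := by
        intro x hx
        exact Real.norm_of_nonneg (hφ0 x (le_of_lt (lt_of_lt_of_le hac₀ (le_of_lt hx.1))))
      have : ∫ x in c₀..i, ‖φ x‖ = ∫ x in c₀..i, φ x := by
        rw [intervalIntegral.integral_of_le hi, intervalIntegral.integral_of_le hi]
        apply setIntegral_congr_fun measurableSet_Ioc
        intro x hx; exact hnorm x hx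
      rw [this, hftc]
      have := hFle i (lt_of_lt_of_le hac₀ hi)
      linarith
    · intro i
      rcases le_or_gt i c₀ with h | h
      · rw [Ioc_eq_empty (by linarith [h])]
        simp
      · have : Ioc c₀ i ⊆ Icc c₀ i := Ioc_subset_Icc_self
        apply IntegrableOn.mono_set _ this
        apply ContinuousOn.integrableOn_Icc
        exact hφcont.mono (fun y hy => lt_of_lt_of_le hac₀ hy.1)
  have hφIoi : IntegrableOn φ (Ioi a) := by
    rw [← Ioc_union_Ioi_eq_Ioi (le_of_lt hac₀)]
    exact hnear.union htail
  have hφIci : IntegrableOn φ (Ici a) := by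
    rw [integrableOn_Ici_iff_integrableOn_Ioi]
    exact hφIoi
  -- conclusions
  have h1 : IntegrableOn (fun x => (deriv ψ x) ^ 2) (Set.Ici a) := by
    apply Integrable.mono' hφIci
    · exact ((measurable_deriv ψ).pow_const 2).aestronglyMeasurable
    · filter_upwards [ae_restrict_mem measurableSet_Ici] with x hx
      have := hVE x hx
      have h2 : 0 ≤ (V x - E) * (ψ x) ^ 2 := mul_nonneg (by linarith) (sq_nonneg _)
      rw [Real.norm_of_nonneg (sq_nonneg _)]
      simp only [hφdef]; linarith
  refine ⟨h1, ?_, hφIci⟩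
  have h2 : IntegrableOn (fun x => φ x - (deriv ψ x) ^ 2) (Ici a) := hφIci.sub h1
  apply h2.congr_fun _ measurableSet_Ici
  intro x hx
  have hnn : 0 ≤ V x - E := by linarith [hVE x hx]
  simp only [hφdef, mul_pow, Real.sq_sqrt hnn]
  ring
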